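/- Every Lie derivation L on a triangular algebra 𝔄 = Tri(A, M, B) is proper relative to an enlargement: there exists a triangular algebra 𝔄⁰ containing 𝔄 as a subalgebra with the same identity, a derivation Δ : 𝔄 → 𝔄⁰, and a linear map χ : 𝔄 → Z(𝔄⁰) with χ([x,y]) = 0 for all x, y ∈ 𝔄, such that L = Δ + χ. -/

import Mathlib

set_option linter.unusedSectionVars false
set_option synthInstance.maxHeartbeats 1000000
set_option maxHeartbeats 1600000

open MulOpposite TrivSqZeroExt Finset

section TriDef
variable (R A B M : Type*) [CommRing R] [Ring A] [Ring B] [Algebra R A] [Algebra R B]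
  [AddCommGroup M] [Module R M] [Module A M] [Module Bᵐᵒᵖ M] [SMulCommClass A Bᵐᵒᵖ M]
  [IsScalarTower R A M] [IsScalarTower R Bᵐᵒᵖ M]

/-- left action of `A × B` on `M` through the first factor -/
instance Tri.instModuleProd : Module (A × B) M := Module.compHom M (RingHom.fst A B)

/-- right action of `A × B` on `M` through the second factor -/
instance Tri.instModuleProdOp : Module (A × B)ᵐᵒᵖ M :=
  Module.compHom M (RingHom.op (RingHom.snd A B))

instance Tri.instSMulCommClass : SMulCommClass (A × B) (A × B)ᵐᵒᵖ M :=
  ⟨fun p q m => smul_comm p.1 (op (unop q).2) m⟩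

instance Tri.instTowerL : IsScalarTower R (A × B) M :=
  ⟨fun r p m => show (r • p.1) • m = r • (p.1 • m) from smul_assoc r p.1 m⟩

instance Tri.instTowerR : IsScalarTower R (A × B)ᵐᵒᵖ M :=
  ⟨fun r q m => show (op (r • (unop q).2)) • m = r • ((op (unop q).2) • m) by
    rw [MulOpposite.op_smul]; exact smul_assoc r (op (unop q).2) m⟩

/-- The triangular algebra `Tri(A, M, B)` of matrices `[[a, m],[0, b]]`. -/
abbrev Tri : Type _ := TrivSqZeroExt (A × B) M

variable {A B M}

/-- the matrix `[[a, m],[0, b]]` -/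
def Tri.mk (a : A) (m : M) (b : B) : Tri A B M := ⟨(a, b), m⟩

end TriDef

universe u v w

open Function

section Aux

variable {R : Type*} {A : Type u} {B : Type v} {M : Type w}
  [CommRing R] [Ring A] [Ring B] [Algebra R A] [Algebra R B]
  [AddCommGroup M] [Module R M] [Module A M] [Module Bᵐᵒᵖ M] [SMulCommClass A Bᵐᵒᵖ M]
  [IsScalarTower R A M] [IsScalarTower R Bᵐᵒᵖ M]

namespace TriAux

@[simp] lemma psmul (p : A × B) (m : M) : p • m = p.1 • m := rfl
@[simp] lemma opsmul (p : (A × B)ᵐᵒᵖ) (m : M) : p • m = op (unop p).2 • m := rfl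

@[simp] lemma fst_mk (a : A) (m : M) (b : B) : fst (Tri.mk a m b) = (a, b) := rfl
@[simp] lemma snd_mk (a : A) (m : M) (b : B) : snd (Tri.mk a m b) = m := rfl

lemma mk_mul (a a' : A) (m m' : M) (b b' : B) :
    Tri.mk a m b * Tri.mk a' m' b' = Tri.mk (a * a') (a • m' + op b' • m) (b * b') := by
  refine TrivSqZeroExt.ext ?_ ?_
  · simp [fst_mul, Prod.ext_iff]
  · simp [snd_mul]

lemma mk_add (a a' : A) (m m' : M) (b b' : B) :
    Tri.mk a m b + Tri.mk a' m' b' = Tri.mk (a + a') (m + m') (b + b') := rfl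

lemma mk_sub (a a' : A) (m m' : M) (b b' : B) :
    Tri.mk a m b - Tri.mk a' m' b' = Tri.mk (a - a') (m - m') (b - b') := rfl

lemma mk_smul (r : R) (a : A) (m : M) (b : B) :
    r • Tri.mk a m b = Tri.mk (r • a) (r • m) (b := r • b) := rfl

lemma mk_inj {a a' : A} {m m' : M} {b b' : B} (h : Tri.mk a m b = Tri.mk a' m' b') :
    a = a' ∧ m = m' ∧ b = b' := by
  refine ⟨?_, congrArg snd h, ?_⟩
  · exact congrArg (fun x => (fst x).1) h
  · exact congrArg (fun x => (fst x).2) h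

lemma tri_eq_mk (x : Tri A B M) : x = Tri.mk (fst x).1 (snd x) (fst x).2 := rfl

lemma mk_splits (a : A) (m : M) (b : B) :
    Tri.mk a m b = Tri.mk a 0 0 + Tri.mk 0 m 0 + Tri.mk 0 0 b := by
  simp [mk_add]

variable (R M)

/-- left multiplication operator -/
def LA (a : A) : Module.End R M where
  toFun m := a • m
  map_add' := smul_add a
  map_smul' r m := smul_comm a r m

/-- right multiplication operator -/
def RB (b : B) : Module.End R M where
  toFun m := op b • m
  map_add' := smul_add (op b)
  map_smul' r m := smul_comm (op b) r m

@[simp] lemma LA_apply (a : A) (m : M) : LA R M a m = a • m := rfl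
@[simp] lemma RB_apply (b : B) (m : M) : RB R M b m = op b • m := rfl

lemma LA_add (a a' : A) : LA R M (a + a') = LA R M a + LA R M a' := by
  ext m; simp [add_smul]

lemma LA_mul (a a' : A) : LA R M (a * a') = LA R M a * LA R M a' := by
  ext m; simp [mul_smul]

lemma LA_one : LA R M (1 : A) = 1 := by ext m; simp

lemma LA_smul (r : R) (a : A) : LA R M (r • a) = r • LA R M a := by
  ext m; simp [smul_assoc]

lemma RB_add (b b' : B) : RB R M (b + b') = RB R M b + RB R M b' := by
  ext m; simp [add_smul]

lemma RB_mul (b b' : B) : RB R M (b * b') = RB R M b' * RB R M b := by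
  ext m; simp [op_mul, mul_smul]

lemma RB_one : RB R M (1 : B) = 1 := by ext m; simp

lemma RB_smul (r : R) (b : B) : RB R M (r • b) = r • RB R M b := by
  ext m; simp [op_smul, smul_assoc]

lemma LA_comm_RB (a : A) (b : B) : LA R M a * RB R M b = RB R M b * LA R M a := by
  ext m; exact smul_comm a (op b) m

lemma LA_algebraMap (r : R) : LA R M ((algebraMap R A) r) = (algebraMap R (Module.End R M)) r := by
  ext m
  simp only [LA_apply, Module.algebraMap_end_apply]
  rw [Algebra.algebraMap_eq_smul_one, smul_assoc, one_smul]

lemma RB_algebraMap (r : R) : RB R M ((algebraMap R B) r) = (algebraMap R (Module.End R M)) r := by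
  ext m
  simp only [RB_apply, Module.algebraMap_end_apply]
  rw [Algebra.algebraMap_eq_smul_one, op_smul, smul_assoc, op_one, one_smul]

variable {R M}

section Struct

variable (L : Tri A B M →ₗ[R] Tri A B M)

/-- components of `L` on `A` -/
def fA (a : A) : A := (fst (L (Tri.mk a 0 0))).1
def gA (a : A) : M := snd (L (Tri.mk a 0 0))
def hA (a : A) : B := (fst (L (Tri.mk a 0 0))).2
def fB (b : B) : A := (fst (L (Tri.mk 0 0 b))).1
def gB (b : B) : M := snd (L (Tri.mk 0 0 b))
def hB (b : B) : B := (fst (L (Tri.mk 0 0 b))).2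
def tauf (m : M) : M := snd (L (Tri.mk 0 m 0))
def n0 : M := gB L 1

lemma L_mk_a (a : A) : L (Tri.mk a 0 0) = Tri.mk (fA L a) (gA L a) (hA L a) := rfl
lemma L_mk_b (b : B) : L (Tri.mk 0 0 b) = Tri.mk (fB L b) (gB L b) (hB L b) := rfl

variable (hL : ∀ x y : Tri A B M,
      L (x * y - y * x) = (L x * y - y * L x) + (x * L y - L y * x))

include hL

lemma S1 (m : M) : fst (L (Tri.mk 0 m 0)) = 0 := by
  have h := hL (Tri.mk 1 0 0) (Tri.mk 0 m 0)
  have hxy : (Tri.mk (1:A) 0 (0:B) * Tri.mk 0 m 0 - Tri.mk 0 m 0 * Tri.mk 1 0 0)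
      = Tri.mk 0 m 0 := by
    simp [mk_mul, mk_sub]
  rw [hxy] at h
  have h2 := congrArg TrivSqZeroExt.fst h
  simp only [fst_add, fst_sub, fst_mul, fst_mk] at h2
  rw [h2]
  ext <;> simp

lemma L_mk_m (m : M) : L (Tri.mk 0 m 0) = Tri.mk 0 (tauf L m) 0 := by
  have h := S1 L hL m
  refine TrivSqZeroExt.ext ?_ rfl
  rw [h]; rfl

lemma S2 (a : A) (m : M) :
    tauf L (a • m) = fA L a • m - op (hA L a) • m + a • tauf L m := by
  have h := hL (Tri.mk a 0 0) (Tri.mk 0 m 0)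
  have hxy : (Tri.mk a 0 (0:B) * Tri.mk 0 m 0 - Tri.mk 0 m 0 * Tri.mk a 0 0)
      = Tri.mk 0 (a • m) 0 := by
    simp [mk_mul, mk_sub]
  rw [hxy, L_mk_a, L_mk_m L hL] at h
  have h2 := congrArg TrivSqZeroExt.snd h
  simp only [snd_add, snd_sub, snd_mul, snd_mk, fst_mk, psmul, opsmul, unop_op,
    smul_zero, zero_smul, op_zero, add_zero, zero_add, sub_zero] at h2
  rw [h2]; abel

lemma S3 (b : B) (m : M) :
    tauf L (op b • m) = op (hB L b) • m - fB L b • m + op b • tauf L m := by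
  have h := hL (Tri.mk 0 0 b) (Tri.mk 0 m 0)
  have hxy : (Tri.mk (0:A) 0 b * Tri.mk 0 m 0 - Tri.mk 0 m 0 * Tri.mk 0 0 b)
      = Tri.mk 0 (-(op b • m)) 0 := by
    simp [mk_mul, mk_sub]
  rw [hxy, L_mk_b, L_mk_m L hL] at h
  have htn : tauf L (-(op b • m)) = - tauf L (op b • m) := by
    unfold tauf
    have : Tri.mk (0:A) (-(op b • m)) (0:B) = - Tri.mk 0 (op b • m) 0 := by
      refine TrivSqZeroExt.ext (by simp) (by simp)
    rw [this, map_neg, snd_neg]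
  have h2 := congrArg TrivSqZeroExt.snd h
  rw [htn] at h2
  simp only [snd_add, snd_sub, snd_mul, snd_mk, fst_mk, psmul, opsmul, unop_op,
    smul_zero, zero_smul, op_zero, add_zero, zero_add, sub_zero] at h2
  have h3 := congrArg Neg.neg h2
  simp only [neg_neg, neg_add, neg_sub] at h3
  rw [h3]; abel

lemma S4 (a : A) (b : B) :
    a * fB L b = fB L b * a ∧ hA L a * b = b * hA L a ∧
      op b • gA L a + a • gB L b = 0 := by
  have h := hL (Tri.mk a 0 0) (Tri.mk 0 0 b)
  have hxy : (Tri.mk a (0:M) 0 * Tri.mk 0 0 b - Tri.mk 0 0 b * Tri.mk a 0 0)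
      = 0 := by
    simp [mk_mul, mk_sub]
  rw [hxy, map_zero, L_mk_a, L_mk_b] at h
  have h1 := congrArg (fun x => (TrivSqZeroExt.fst x).1) h.symm
  have h2 := congrArg (fun x => (TrivSqZeroExt.fst x).2) h.symm
  have h3 := congrArg TrivSqZeroExt.snd h.symm
  simp only [fst_add, fst_sub, fst_mul, fst_mk, snd_add, snd_sub, snd_mul, snd_mk,
    psmul, opsmul, unop_op, smul_zero, zero_smul, op_zero, add_zero, zero_add,
    Prod.fst_add, Prod.fst_sub, Prod.fst_mul, Prod.snd_add, Prod.snd_sub, Prod.snd_mul,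
    fst_zero, snd_zero, Prod.fst_zero, Prod.snd_zero, mul_zero, zero_mul, sub_zero] at h1 h2 h3
  exact ⟨sub_eq_zero.mp h1, sub_eq_zero.mp h2, h3⟩

lemma gA_eq (a : A) : gA L a = -(a • n0 L) := by
  have h := (S4 L hL a 1).2.2
  simp only [op_one, one_smul] at h
  exact eq_neg_of_add_eq_zero_left h

lemma gB_eq (b : B) : gB L b = op b • n0 L := by
  have h := (S4 L hL 1 b).2.2
  simp only [one_smul] at h
  have h1 : gA L (1:A) = -(n0 L) := by
    have := gA_eq L hL (1:A); rwa [one_smul] at this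
  rw [h1] at h
  have : gB L b = -(op b • (-(n0 L))) := eq_neg_of_add_eq_zero_right h
  rw [this, smul_neg, neg_neg]

lemma L_decomp (x : Tri A B M) :
    L x = L (Tri.mk (fst x).1 0 0) + L (Tri.mk 0 (snd x) 0) + L (Tri.mk 0 0 (fst x).2) := by
  rw [← map_add, ← map_add, ← mk_splits]
  rfl

/-- the `tau` component as an endomorphism -/
def tauE : Module.End R M where
  toFun := tauf L
  map_add' m m' := by
    unfold tauf
    have : Tri.mk (0:A) (m + m') (0:B) = Tri.mk 0 m 0 + Tri.mk 0 m' 0 := by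
      rw [mk_add]; simp
    rw [this, map_add, snd_add]
  map_smul' r m := by
    show tauf L (r • m) = r • tauf L m
    unfold tauf
    have : Tri.mk (0:A) (r • m) (0:B) = r • Tri.mk 0 m 0 := by
      rw [mk_smul]; simp
    rw [this, map_smul, snd_smul]

@[simp] lemma tauE_apply (m : M) : tauE L m = tauf L m := rfl

lemma opS2 (a : A) : tauE L * LA R M a - LA R M a * tauE L
    = LA R M (fA L a) - RB R M (hA L a) := by
  ext m
  simp only [LinearMap.sub_apply, Module.End.mul_apply, LA_apply, RB_apply]
  show tauf L (a • m) - a • tauf L m = fA L a • m - op (hA L a) • m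
  rw [S2 L hL a m]; abel

lemma opS3 (b : B) : tauE L * RB R M b - RB R M b * tauE L
    = RB R M (hB L b) - LA R M (fB L b) := by
  ext m
  simp only [LinearMap.sub_apply, Module.End.mul_apply, LA_apply, RB_apply]
  show tauf L (op b • m) - op b • tauf L m = op (hB L b) • m - fB L b • m
  rw [S3 L hL b m]; abel

end Struct

section Alg

variable (R A B M)

/-- the commutant of the bimodule actions -/
def Cset : Set (Module.End R M) :=
  {g | (∀ a : A, LA R M a * g = g * LA R M a) ∧ (∀ b : B, RB R M b * g = g * RB R M b)}

/-- the center of the commutant -/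
def Wset : Set (Module.End R M) :=
  {g | g ∈ Cset R A B M ∧ ∀ g' ∈ Cset R A B M, g * g' = g' * g}

variable {A B}

lemma RB_mem_W (b : B) (hb : ∀ b' : B, b * b' = b' * b) : RB R M b ∈ Wset R A B M := by
  refine ⟨⟨fun a => LA_comm_RB R M a b, fun b' => ?_⟩, fun g' hg' => hg'.2 b⟩
  rw [← RB_mul, ← RB_mul, hb b']

lemma LA_mem_W (a : A) (ha : ∀ a' : A, a * a' = a' * a) : LA R M a ∈ Wset R A B M := by
  refine ⟨⟨fun a' => ?_, fun b => (LA_comm_RB R M a b).symm⟩,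
    fun g' hg' => hg'.1 a⟩
  rw [← LA_mul, ← LA_mul, ha a']

variable (A B)

/-- the enlarged left algebra -/
def Asub : Subalgebra R (Module.End R M) :=
  Algebra.adjoin R (Set.range (LA R M (A := A)) ∪ Wset R A B M)

/-- the enlarged right algebra (not yet opposed) -/
def Bsub : Subalgebra R (Module.End R M) :=
  Algebra.adjoin R (Set.range (RB R M (B := B)) ∪ Wset R A B M)

lemma Asub_le_cent : Asub R A B M ≤
    Subalgebra.centralizer R (Set.range (RB R M (B := B)) ∪ Wset R A B M) := by
  refine Algebra.adjoin_le ?_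
  rintro g (⟨a, rfl⟩ | hg) <;> rw [SetLike.mem_coe, Subalgebra.mem_centralizer_iff] <;>
    rintro z (⟨b, rfl⟩ | hz)
  · exact (LA_comm_RB R M a b).symm
  · exact (hz.1.1 a).symm
  · exact hg.1.2 b
  · exact (hg.2 z hz.1).symm

lemma Bsub_le_cent : Bsub R A B M ≤
    Subalgebra.centralizer R (Set.range (LA R M (A := A)) ∪ Wset R A B M) := by
  refine Algebra.adjoin_le ?_
  rintro g (⟨b, rfl⟩ | hg) <;> rw [SetLike.mem_coe, Subalgebra.mem_centralizer_iff] <;>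
    rintro z (⟨a, rfl⟩ | hz)
  · exact LA_comm_RB R M a b
  · exact (hz.1.2 b).symm
  · exact hg.1.1 a
  · exact (hg.2 z hz.1).symm

variable {R A B M}

lemma comm_AB {x y : Module.End R M} (hx : x ∈ Asub R A B M) (hy : y ∈ Bsub R A B M) :
    x * y = y * x := by
  have hx' := Asub_le_cent R A B M hx
  rw [Subalgebra.mem_centralizer_iff] at hx'
  have : Bsub R A B M ≤ Subalgebra.centralizer R {x} := by
    refine Algebra.adjoin_le ?_
    intro z hz
    rw [SetLike.mem_coe, Subalgebra.mem_centralizer_iff]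
    rintro w rfl
    exact (hx' z hz).symm
  have hy' := this hy
  rw [Subalgebra.mem_centralizer_iff] at hy'
  exact hy' x rfl

lemma W_comm_Asub {g x : Module.End R M} (hg : g ∈ Wset R A B M) (hx : x ∈ Asub R A B M) :
    g * x = x * g := by
  have hx' := Asub_le_cent R A B M hx
  rw [Subalgebra.mem_centralizer_iff] at hx'
  exact hx' g (Or.inr hg)

lemma W_comm_Bsub {g x : Module.End R M} (hg : g ∈ Wset R A B M) (hx : x ∈ Bsub R A B M) :
    g * x = x * g := by
  have hx' := Bsub_le_cent R A B M hx
  rw [Subalgebra.mem_centralizer_iff] at hx'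
  exact hx' g (Or.inr hg)

lemma LA_mem_Asub (a : A) : LA R M a ∈ Asub R A B M :=
  Algebra.subset_adjoin (Or.inl ⟨a, rfl⟩)

lemma W_mem_Asub {g : Module.End R M} (hg : g ∈ Wset R A B M) : g ∈ Asub R A B M :=
  Algebra.subset_adjoin (Or.inr hg)

lemma RB_mem_Bsub (b : B) : RB R M b ∈ Bsub R A B M :=
  Algebra.subset_adjoin (Or.inl ⟨b, rfl⟩)

lemma W_mem_Bsub {g : Module.End R M} (hg : g ∈ Wset R A B M) : g ∈ Bsub R A B M :=
  Algebra.subset_adjoin (Or.inr hg)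

end Alg

section Enlarge

variable (R A B M)

/-- the enlarged left algebra, lifted to the right universe -/
abbrev A0 : Type (max u v w) := ULift.{max u v} ↥(Asub R A B M)

/-- the enlarged right algebra, lifted -/
abbrev B0 : Type (max u v w) := ULift.{max u v} (↥(Bsub R A B M))ᵐᵒᵖ

/-- evaluation homomorphism of the left algebra -/
def piA : A0 R A B M →+* Module.End R M :=
  ((Asub R A B M).val.toRingHom).comp (ULift.ringEquiv.toRingHom)

@[simp] lemma piA_apply (x : A0 R A B M) : piA R A B M x = (x.down : Module.End R M) := rfl

/-- evaluation (anti)homomorphism of the right algebra -/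
def rhoB : (B0 R A B M)ᵐᵒᵖ →+* Module.End R M where
  toFun y := ((unop ((unop y).down) : ↥(Bsub R A B M)) : Module.End R M)
  map_one' := rfl
  map_mul' y z := rfl
  map_zero' := rfl
  map_add' y z := rfl

@[simp] lemma rhoB_apply (y : (B0 R A B M)ᵐᵒᵖ) :
    rhoB R A B M y = ((unop ((unop y).down) : ↥(Bsub R A B M)) : Module.End R M) := rfl

/-- left action of the enlarged algebra -/
def mA0 : Module (A0 R A B M) M := Module.compHom M (piA R A B M)

/-- right action of the enlarged algebra -/
def mB0 : Module (B0 R A B M)ᵐᵒᵖ M := Module.compHom M (rhoB R A B M)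

attribute [reducible] mA0 mB0

lemma mA0_smul (x : A0 R A B M) (m : M) :
    letI := mA0 R A B M
    x • m = (x.down : Module.End R M) m := rfl

lemma mB0_smul (y : (B0 R A B M)ᵐᵒᵖ) (m : M) :
    letI := mB0 R A B M
    y • m = ((unop ((unop y).down) : ↥(Bsub R A B M)) : Module.End R M) m := rfl

lemma scAB : letI := mA0 R A B M; letI := mB0 R A B M
    SMulCommClass (A0 R A B M) (B0 R A B M)ᵐᵒᵖ M := by
  letI := mA0 R A B M; letI := mB0 R A B M
  refine ⟨fun x y m => ?_⟩
  rw [mA0_smul, mA0_smul, mB0_smul, mB0_smul]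
  have h := comm_AB (x := (x.down : Module.End R M))
    (y := ((unop ((unop y).down) : ↥(Bsub R A B M)) : Module.End R M))
    x.down.2 (unop ((unop y).down)).2
  have h2 := LinearMap.congr_fun h m
  simpa [Module.End.mul_apply] using h2

lemma tA0 : letI := mA0 R A B M
    IsScalarTower R (A0 R A B M) M := by
  letI := mA0 R A B M
  refine ⟨fun r x m => ?_⟩
  rw [mA0_smul, mA0_smul]
  have : ((r • x).down : Module.End R M) = r • (x.down : Module.End R M) := rfl
  rw [this, LinearMap.smul_apply]

lemma tB0 : letI := mB0 R A B M
    IsScalarTower R (B0 R A B M)ᵐᵒᵖ M := by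
  letI := mB0 R A B M
  refine ⟨fun r y m => ?_⟩
  rw [mB0_smul, mB0_smul]
  have : ((unop ((unop (r • y)).down) : ↥(Bsub R A B M)) : Module.End R M)
      = r • ((unop ((unop y).down) : ↥(Bsub R A B M)) : Module.End R M) := rfl
  rw [this, LinearMap.smul_apply]

variable {A B}

/-- embedding of `A` -/
def phiA : A →ₐ[R] A0 R A B M where
  toFun a := ⟨⟨LA R M a, LA_mem_Asub a⟩⟩
  map_one' := by apply ULift.ext; apply Subtype.ext; exact LA_one R M
  map_mul' a a' := by apply ULift.ext; apply Subtype.ext; exact LA_mul R M a a'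
  map_zero' := by
    apply ULift.ext; apply Subtype.ext
    show LA R M (0 : A) = 0
    ext m; simp
  map_add' a a' := by apply ULift.ext; apply Subtype.ext; exact LA_add R M a a'
  commutes' r := by
    apply ULift.ext; apply Subtype.ext
    show LA R M ((algebraMap R A) r) = _
    rw [LA_algebraMap]
    rfl

/-- embedding of `B` -/
def phiB : B →ₐ[R] B0 R A B M where
  toFun b := ⟨op ⟨RB R M b, RB_mem_Bsub b⟩⟩
  map_one' := by
    apply ULift.ext; apply unop_injective; apply Subtype.ext; exact RB_one R M
  map_mul' b b' := by
    apply ULift.ext; apply unop_injective; apply Subtype.ext; exact RB_mul R M b b'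
  map_zero' := by
    apply ULift.ext; apply unop_injective; apply Subtype.ext
    show RB R M (0 : B) = 0
    ext m; simp
  map_add' b b' := by
    apply ULift.ext; apply unop_injective; apply Subtype.ext; exact RB_add R M b b'
  commutes' r := by
    apply ULift.ext; apply unop_injective; apply Subtype.ext
    show RB R M ((algebraMap R B) r) = _
    rw [RB_algebraMap]
    rfl

lemma phiA_act (a : A) (m : M) :
    letI := mA0 R A B M
    phiA R (B := B) M a • m = a • m := rfl

lemma phiB_act (b : B) (m : M) :
    letI := mB0 R A B M
    op (phiB R (A := A) M b) • m = op b • m := rfl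

end Enlarge

section Delta

variable (L : Tri A B M →ₗ[R] Tri A B M)
  (hL : ∀ x y : Tri A B M,
      L (x * y - y * x) = (L x * y - y * L x) + (x * L y - L y * x))

include hL in
lemma DA_mem (a : A) :
    tauE L * LA R M a - LA R M a * tauE L ∈ Asub R A B M := by
  rw [opS2 L hL a]
  exact sub_mem (LA_mem_Asub _)
    (W_mem_Asub (RB_mem_W R M _ (fun b' => (S4 L hL a b').2.1)))

include hL in
lemma DB_mem (b : B) :
    tauE L * RB R M b - RB R M b * tauE L ∈ Bsub R A B M := by
  rw [opS3 L hL b]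
  exact sub_mem (RB_mem_Bsub _)
    (W_mem_Bsub (LA_mem_W R M _ (fun a' => ((S4 L hL a' b).1).symm)))

/-- extensionality for the enlarged triangular algebra via the evaluation maps -/
lemma tri0_ext {x y : Tri (A0 R A B M) (B0 R A B M) M}
    (h1 : (((fst x).1.down : ↥(Asub R A B M)) : Module.End R M)
        = (((fst y).1.down : ↥(Asub R A B M)) : Module.End R M))
    (h2 : ((unop ((fst x).2.down) : ↥(Bsub R A B M)) : Module.End R M)
        = ((unop ((fst y).2.down) : ↥(Bsub R A B M)) : Module.End R M))
    (h3 : snd x = snd y) : x = y := by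
  refine TrivSqZeroExt.ext (Prod.ext ?_ ?_) h3
  · exact ULift.ext _ _ (Subtype.ext h1)
  · exact ULift.ext _ _ (unop_injective (Subtype.ext h2))

lemma tau_add (m m' : M) : tauf L (m + m') = tauf L m + tauf L m' :=
  (tauE L).map_add m m'

lemma tau_smul (r : R) (m : M) : tauf L (r • m) = r • tauf L m :=
  (tauE L).map_smul r m

/-- the derivation part -/
def Delta : Tri A B M →ₗ[R] Tri (A0 R A B M) (B0 R A B M) M where
  toFun x :=
    ⟨(⟨⟨tauE L * LA R M (fst x).1 - LA R M (fst x).1 * tauE L, DA_mem L hL (fst x).1⟩⟩,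
      ⟨op ⟨tauE L * RB R M (fst x).2 - RB R M (fst x).2 * tauE L, DB_mem L hL (fst x).2⟩⟩),
     tauf L (snd x) - (fst x).1 • n0 L + op (fst x).2 • n0 L⟩
  map_add' x y := by
    refine tri0_ext ?_ ?_ ?_
    · show tauE L * LA R M (fst (x + y)).1 - LA R M (fst (x + y)).1 * tauE L
        = (tauE L * LA R M (fst x).1 - LA R M (fst x).1 * tauE L)
          + (tauE L * LA R M (fst y).1 - LA R M (fst y).1 * tauE L)
      rw [fst_add, Prod.fst_add, LA_add]
      noncomm_ring
    · show tauE L * RB R M (fst (x + y)).2 - RB R M (fst (x + y)).2 * tauE L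
        = (tauE L * RB R M (fst x).2 - RB R M (fst x).2 * tauE L)
          + (tauE L * RB R M (fst y).2 - RB R M (fst y).2 * tauE L)
      rw [fst_add, Prod.snd_add, RB_add]
      noncomm_ring
    · show tauf L (snd (x + y)) - (fst (x + y)).1 • n0 L + op (fst (x + y)).2 • n0 L
        = (tauf L (snd x) - (fst x).1 • n0 L + op (fst x).2 • n0 L)
          + (tauf L (snd y) - (fst y).1 • n0 L + op (fst y).2 • n0 L)
      rw [fst_add, snd_add, Prod.fst_add, Prod.snd_add, tau_add, add_smul, op_add, add_smul]
      abel
  map_smul' r x := by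
    refine tri0_ext ?_ ?_ ?_
    · show tauE L * LA R M (fst (r • x)).1 - LA R M (fst (r • x)).1 * tauE L
        = r • (tauE L * LA R M (fst x).1 - LA R M (fst x).1 * tauE L)
      rw [fst_smul, Prod.smul_fst, LA_smul, smul_sub, Algebra.mul_smul_comm,
        Algebra.smul_mul_assoc]
    · show tauE L * RB R M (fst (r • x)).2 - RB R M (fst (r • x)).2 * tauE L
        = r • (tauE L * RB R M (fst x).2 - RB R M (fst x).2 * tauE L)
      rw [fst_smul, Prod.smul_snd, RB_smul, smul_sub, Algebra.mul_smul_comm,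
        Algebra.smul_mul_assoc]
    · show tauf L (snd (r • x)) - (fst (r • x)).1 • n0 L + op (fst (r • x)).2 • n0 L
        = r • (tauf L (snd x) - (fst x).1 • n0 L + op (fst x).2 • n0 L)
      rw [fst_smul, snd_smul, Prod.smul_fst, Prod.smul_snd, tau_smul, smul_assoc,
        op_smul, smul_assoc, smul_add, smul_sub]

lemma Delta_fst1 (x : Tri A B M) :
    (((fst (Delta L hL x)).1.down : ↥(Asub R A B M)) : Module.End R M)
      = tauE L * LA R M (fst x).1 - LA R M (fst x).1 * tauE L := rfl

lemma Delta_fst2 (x : Tri A B M) :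
    ((unop ((fst (Delta L hL x)).2.down) : ↥(Bsub R A B M)) : Module.End R M)
      = tauE L * RB R M (fst x).2 - RB R M (fst x).2 * tauE L := rfl

lemma Delta_snd (x : Tri A B M) :
    snd (Delta L hL x)
      = tauf L (snd x) - (fst x).1 • n0 L + op (fst x).2 • n0 L := rfl

variable (R A B M) in
/-- the embedding of the original triangular algebra -/
def iota : Tri A B M →ₗ[R] Tri (A0 R A B M) (B0 R A B M) M where
  toFun x := ⟨(phiA R M (fst x).1, phiB R M (fst x).2), snd x⟩
  map_add' x y := by
    refine tri0_ext ?_ ?_ rfl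
    · show (((phiA R M (fst (x + y)).1).down : ↥(Asub R A B M)) : Module.End R M) = _
      rw [fst_add, Prod.fst_add, map_add (phiA R M)]
      rfl
    · show ((unop ((phiB R M (fst (x + y)).2).down) : ↥(Bsub R A B M)) : Module.End R M) = _
      rw [fst_add, Prod.snd_add, map_add (phiB R M)]
      rfl
  map_smul' r x := by
    refine tri0_ext ?_ ?_ rfl
    · show (((phiA R M (fst (r • x)).1).down : ↥(Asub R A B M)) : Module.End R M) = _
      rw [fst_smul, Prod.smul_fst, map_smul (phiA R M)]
      rfl
    · show ((unop ((phiB R M (fst (r • x)).2).down) : ↥(Bsub R A B M)) : Module.End R M) = _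
      rw [fst_smul, Prod.smul_snd, map_smul (phiB R M)]
      rfl

lemma iota_fst1 (x : Tri A B M) :
    (((fst (iota R A B M x)).1.down : ↥(Asub R A B M)) : Module.End R M)
      = LA R M (fst x).1 := rfl

lemma iota_fst2 (x : Tri A B M) :
    ((unop ((fst (iota R A B M x)).2.down) : ↥(Bsub R A B M)) : Module.End R M)
      = RB R M (fst x).2 := rfl

lemma iota_snd (x : Tri A B M) :
    snd (iota R A B M x) = snd x := rfl

/-- the central part -/
def chi : Tri A B M →ₗ[R] Tri (A0 R A B M) (B0 R A B M) M :=
  (iota R A B M).comp (L : Tri A B M →ₗ[R] Tri A B M) - Delta L hL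

lemma iota_L_eq (x : Tri A B M) : iota R A B M (L x) = Delta L hL x + chi L hL x := by
  unfold chi
  rw [LinearMap.sub_apply, LinearMap.comp_apply]
  abel

include hL in
lemma Lx_fst1 (x : Tri A B M) :
    (fst (L x)).1 = fA L (fst x).1 + fB L (fst x).2 := by
  rw [L_decomp L hL x, fst_add, fst_add, Prod.fst_add, Prod.fst_add, S1 L hL (snd x)]
  simp only [Prod.fst_zero, add_zero]
  rfl

include hL in
lemma Lx_fst2 (x : Tri A B M) :
    (fst (L x)).2 = hA L (fst x).1 + hB L (fst x).2 := by
  rw [L_decomp L hL x, fst_add, fst_add, Prod.snd_add, Prod.snd_add, S1 L hL (snd x)]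
  simp only [Prod.snd_zero, add_zero]
  rfl

include hL in
lemma Lx_snd (x : Tri A B M) :
    snd (L x) = gA L (fst x).1 + tauf L (snd x) + gB L (fst x).2 := by
  rw [L_decomp L hL x, snd_add, snd_add]
  rfl

lemma chi_fst1 (x : Tri A B M) :
    (((fst (chi L hL x)).1.down : ↥(Asub R A B M)) : Module.End R M)
      = LA R M (fB L (fst x).2) + RB R M (hA L (fst x).1) := by
  show LA R M (fst (L x)).1
      - (tauE L * LA R M (fst x).1 - LA R M (fst x).1 * tauE L) = _
  rw [Lx_fst1 L hL x, LA_add, opS2 L hL]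
  abel

lemma chi_fst2 (x : Tri A B M) :
    ((unop ((fst (chi L hL x)).2.down) : ↥(Bsub R A B M)) : Module.End R M)
      = LA R M (fB L (fst x).2) + RB R M (hA L (fst x).1) := by
  show RB R M (fst (L x)).2
      - (tauE L * RB R M (fst x).2 - RB R M (fst x).2 * tauE L) = _
  rw [Lx_fst2 L hL x, RB_add, opS3 L hL]
  abel

lemma chi_snd (x : Tri A B M) : snd (chi L hL x) = 0 := by
  show snd (L x) - (tauf L (snd x) - (fst x).1 • n0 L + op (fst x).2 • n0 L) = 0
  rw [Lx_snd L hL x, gA_eq L hL, gB_eq L hL]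
  abel

lemma chi_central (x : Tri A B M) :
    letI := mA0 R A B M; letI := mB0 R A B M; letI := scAB R A B M
    letI := tA0 R A B M; letI := tB0 R A B M
    chi L hL x ∈ Subring.center (Tri (A0 R A B M) (B0 R A B M) M) := by
  letI := mA0 R A B M; letI := mB0 R A B M; letI := scAB R A B M
  letI := tA0 R A B M; letI := tB0 R A B M
  letI sc2 := @Tri.instSMulCommClass (A0 R A B M) (B0 R A B M) M _ _ _ (mA0 R A B M)
    (mB0 R A B M) (scAB R A B M)
  letI rg := @TrivSqZeroExt.ring (A0 R A B M × B0 R A B M) M _ _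
    (@Tri.instModuleProd _ _ M _ _ _ (mA0 R A B M)) (@Tri.instModuleProdOp _ _ M _ _ _ (mB0 R A B M)) sc2
  refine (@Subring.mem_center_iff _ rg _).mpr ?_
  intro g
  have hw1 : LA R M (fB L (fst x).2) ∈ Wset R A B M :=
    LA_mem_W R M _ (fun a' => ((S4 L hL a' _).1).symm)
  have hw2 : RB R M (hA L (fst x).1) ∈ Wset R A B M :=
    RB_mem_W R M _ (fun b' => (S4 L hL _ b').2.1)
  refine tri0_ext ?_ ?_ ?_
  · show ((fst g).1.down : ↥(Asub R A B M)) * (((fst (chi L hL x)).1.down : ↥(Asub R A B M)) : Module.End R M)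
        = (((fst (chi L hL x)).1.down : ↥(Asub R A B M)) : Module.End R M) * ((fst g).1.down : ↥(Asub R A B M))
    rw [chi_fst1 L hL x, mul_add, add_mul]
    have hg : (((fst g).1.down : ↥(Asub R A B M)) : Module.End R M) ∈ Asub R A B M :=
      (fst g).1.down.2
    rw [W_comm_Asub hw1 hg, W_comm_Asub hw2 hg]
  · show ((unop ((fst (chi L hL x)).2.down) : ↥(Bsub R A B M)) : Module.End R M)
          * ((unop ((fst g).2.down) : ↥(Bsub R A B M)) : Module.End R M)
        = ((unop ((fst g).2.down) : ↥(Bsub R A B M)) : Module.End R M)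
          * ((unop ((fst (chi L hL x)).2.down) : ↥(Bsub R A B M)) : Module.End R M)
    rw [chi_fst2 L hL x, mul_add, add_mul]
    have hg : ((unop ((fst g).2.down) : ↥(Bsub R A B M)) : Module.End R M) ∈ Bsub R A B M :=
      (unop ((fst g).2.down)).2
    rw [W_comm_Bsub hw1 hg, W_comm_Bsub hw2 hg]
  · rw [snd_mul, snd_mul, chi_snd L hL x, smul_zero, smul_zero, add_zero, zero_add]
    show ((unop ((fst (chi L hL x)).2.down) : ↥(Bsub R A B M)) : Module.End R M) (snd g)
        = (((fst (chi L hL x)).1.down : ↥(Asub R A B M)) : Module.End R M) (snd g)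
    rw [chi_fst1 L hL x, chi_fst2 L hL x]

lemma iota_mul (z z' : Tri A B M) :
    letI := mA0 R A B M; letI := mB0 R A B M; letI := scAB R A B M
    letI := tA0 R A B M; letI := tB0 R A B M
    iota R A B M (z * z') = iota R A B M z * iota R A B M z' := by
  letI := mA0 R A B M; letI := mB0 R A B M; letI := scAB R A B M
  letI := tA0 R A B M; letI := tB0 R A B M
  refine tri0_ext ?_ ?_ ?_
  · show LA R M (fst (z * z')).1 = LA R M (fst z).1 * LA R M (fst z').1
    rw [fst_mul, Prod.fst_mul, LA_mul]
  · show RB R M (fst (z * z')).2 = RB R M (fst z').2 * RB R M (fst z).2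
    rw [fst_mul, Prod.snd_mul, RB_mul]
  · rfl

lemma Delta_der (x y : Tri A B M) :
    letI := mA0 R A B M; letI := mB0 R A B M; letI := scAB R A B M
    letI := tA0 R A B M; letI := tB0 R A B M
    Delta L hL (x * y) = Delta L hL x * iota R A B M y + iota R A B M x * Delta L hL y := by
  letI := mA0 R A B M; letI := mB0 R A B M; letI := scAB R A B M
  letI := tA0 R A B M; letI := tB0 R A B M
  refine tri0_ext ?_ ?_ ?_
  · show tauE L * LA R M (fst (x * y)).1 - LA R M (fst (x * y)).1 * tauE L
        = (tauE L * LA R M (fst x).1 - LA R M (fst x).1 * tauE L) * LA R M (fst y).1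
          + LA R M (fst x).1 * (tauE L * LA R M (fst y).1 - LA R M (fst y).1 * tauE L)
    rw [fst_mul, Prod.fst_mul, LA_mul]
    noncomm_ring
  · show tauE L * RB R M (fst (x * y)).2 - RB R M (fst (x * y)).2 * tauE L
        = RB R M (fst y).2 * (tauE L * RB R M (fst x).2 - RB R M (fst x).2 * tauE L)
          + (tauE L * RB R M (fst y).2 - RB R M (fst y).2 * tauE L) * RB R M (fst x).2
    rw [fst_mul, Prod.snd_mul, RB_mul]
    noncomm_ring
  · show tauf L (snd (x * y)) - (fst (x * y)).1 • n0 L + op (fst (x * y)).2 • n0 L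
        = ((tauE L * LA R M (fst x).1 - LA R M (fst x).1 * tauE L) (snd y)
            + op (fst y).2 • (tauf L (snd x) - (fst x).1 • n0 L + op (fst x).2 • n0 L))
          + ((fst x).1 • (tauf L (snd y) - (fst y).1 • n0 L + op (fst y).2 • n0 L)
            + (tauE L * RB R M (fst y).2 - RB R M (fst y).2 * tauE L) (snd x))
    rw [opS2 L hL, opS3 L hL, snd_mul, fst_mul, psmul, opsmul, unop_op,
      Prod.fst_mul, Prod.snd_mul, tau_add, S2 L hL, S3 L hL]
    simp only [LinearMap.sub_apply, LA_apply, RB_apply, smul_sub, smul_add,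
      mul_smul, op_mul]
    rw [smul_comm ((fst x).1) (op (fst y).2) (n0 L)]
    abel

lemma chi_comm (x y : Tri A B M) :
    letI := mA0 R A B M; letI := mB0 R A B M; letI := scAB R A B M
    letI := tA0 R A B M; letI := tB0 R A B M
    chi L hL (x * y - y * x) = 0 := by
  letI := mA0 R A B M; letI := mB0 R A B M; letI := scAB R A B M
  letI := tA0 R A B M; letI := tB0 R A B M
  letI sc2 := @Tri.instSMulCommClass (A0 R A B M) (B0 R A B M) M _ _ _ (mA0 R A B M)
    (mB0 R A B M) (scAB R A B M)
  letI rg := @TrivSqZeroExt.ring (A0 R A B M × B0 R A B M) M _ _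
    (@Tri.instModuleProd _ _ M _ _ _ (mA0 R A B M)) (@Tri.instModuleProdOp _ _ M _ _ _ (mB0 R A B M)) sc2
  have hc : ∀ z w, w * chi L hL z = chi L hL z * w := fun z w =>
    (@Subring.mem_center_iff _ rg _).mp (chi_central L hL z) w
  have h1 : chi L hL (x * y - y * x)
      = iota R A B M (L (x * y - y * x)) - Delta L hL (x * y - y * x) := by
    show (iota R A B M).comp (L : Tri A B M →ₗ[R] Tri A B M) (x * y - y * x)
        - Delta L hL (x * y - y * x) = _
    rfl
  rw [h1, hL x y, map_sub (Delta L hL), Delta_der L hL x y, Delta_der L hL y x,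
    map_add (iota R A B M), map_sub (iota R A B M), map_sub (iota R A B M),
    iota_mul, iota_mul, iota_mul, iota_mul,
    iota_L_eq L hL x, iota_L_eq L hL y]
  simp only [add_mul, mul_add]
  rw [hc x (iota R A B M y), hc y (iota R A B M x)]
  abel

end Delta




end TriAux

end Aux

/-- Every Lie derivation on a triangular algebra `𝔄 = Tri(A, M, B)` is proper
relative to an enlargement: there is a triangular algebra `𝔄⁰ = Tri(A₀, M, B₀)`
containing `𝔄` as a subalgebra with the same identity, a derivation
`Δ : 𝔄 → 𝔄⁰` and a central-valued linear map `χ` vanishing on commutators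
such that `L = Δ + χ`. -/
theorem lie_derivation_proper
    (R : Type*) (A : Type u) (B : Type v) (M : Type w)
    [CommRing R] [Ring A] [Ring B] [Algebra R A] [Algebra R B]
    [AddCommGroup M] [Module R M] [Module A M] [Module Bᵐᵒᵖ M] [SMulCommClass A Bᵐᵒᵖ M]
    [IsScalarTower R A M] [IsScalarTower R Bᵐᵒᵖ M]
    (faithA : ∀ a : A, (∀ m : M, a • m = 0) → a = 0)
    (faithB : ∀ b : B, (∀ m : M, op b • m = 0) → b = 0)
    (L : Tri A B M →ₗ[R] Tri A B M)
    (hLlie : ∀ x y : Tri A B M,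
      L (x * y - y * x) = (L x * y - y * L x) + (x * L y - L y * x)) :
    ∃ (A₀ B₀ : Type (max u v w)) (iA : Ring A₀) (iB : Ring B₀),
      letI := iA; letI := iB;
      ∃ (aA : Algebra R A₀) (aB : Algebra R B₀), letI := aA; letI := aB;
      ∃ (mA : Module A₀ M) (mB : Module B₀ᵐᵒᵖ M), letI := mA; letI := mB;
      ∃ (sc : SMulCommClass A₀ B₀ᵐᵒᵖ M) (tA : IsScalarTower R A₀ M)
        (tB : IsScalarTower R B₀ᵐᵒᵖ M), letI := sc; letI := tA; letI := tB;
      ∃ (φA : A →ₐ[R] A₀) (φB : B →ₐ[R] B₀),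
        Injective φA ∧ Injective φB ∧
        (∀ (a : A) (m : M), φA a • m = a • m) ∧
        (∀ (b : B) (m : M), op (φB b) • m = op b • m) ∧
        (∀ x : A₀, (∀ m : M, x • m = 0) → x = 0) ∧
        (∀ y : B₀, (∀ m : M, op y • m = 0) → y = 0) ∧
        ∃ Δ χ : Tri A B M →ₗ[R] Tri A₀ B₀ M,
          -- Δ is a derivation
          (∀ x y : Tri A B M,
            Δ (x * y) = Δ x * Tri.mk (φA (fst y).1) (snd y) (φB (fst y).2)
              + Tri.mk (φA (fst x).1) (snd x) (φB (fst x).2) * Δ y) ∧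
          -- χ is central-valued and kills commutators
          (∀ x : Tri A B M, χ x ∈ Subring.center (Tri A₀ B₀ M)) ∧
          (∀ x y : Tri A B M, χ (x * y - y * x) = 0) ∧
          -- L = Δ + χ (inside 𝔄⁰)
          (∀ x : Tri A B M,
            Tri.mk (φA (fst (L x)).1) (snd (L x)) (φB (fst (L x)).2) = Δ x + χ x) := by
  classical
  refine ⟨TriAux.A0 R A B M, TriAux.B0 R A B M, inferInstance, inferInstance,
    inferInstance, inferInstance, TriAux.mA0 R A B M, TriAux.mB0 R A B M,
    TriAux.scAB R A B M, TriAux.tA0 R A B M, TriAux.tB0 R A B M,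
    TriAux.phiA R M, TriAux.phiB R M, ?_, ?_,
    (fun a m => TriAux.phiA_act R M a m), (fun b m => TriAux.phiB_act R M b m),
    ?_, ?_, TriAux.Delta L hLlie, TriAux.chi L hLlie,
    (fun x y => TriAux.Delta_der L hLlie x y),
    (fun x => TriAux.chi_central L hLlie x),
    (fun x y => TriAux.chi_comm L hLlie x y),
    (fun x => TriAux.iota_L_eq L hLlie x)⟩
  · -- injectivity of phiA
    intro a a' h
    have h2 : ∀ m : M, a • m = a' • m := fun m =>
      congrArg (fun z : TriAux.A0 R A B M =>
        ((z.down : ↥(TriAux.Asub R A B M)) : Module.End R M) m) h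
    have h3 := faithA (a - a') (fun m => by rw [sub_smul, h2 m, sub_self])
    exact sub_eq_zero.mp h3
  · -- injectivity of phiB
    intro b b' h
    have h2 : ∀ m : M, op b • m = op b' • m := fun m =>
      congrArg (fun z : TriAux.B0 R A B M =>
        ((unop (z.down) : ↥(TriAux.Bsub R A B M)) : Module.End R M) m) h
    have h3 := faithB (b - b') (fun m => by
      rw [op_sub, sub_smul, h2 m, sub_self])
    exact sub_eq_zero.mp h3
  · -- faithfulness of A0
    intro x hx
    have hz : (x.down : ↥(TriAux.Asub R A B M)) = 0 := by
      apply Subtype.ext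
      apply LinearMap.ext
      intro m
      exact hx m
    exact ULift.ext _ _ hz
  · -- faithfulness of B0
    intro y hy
    have hz : (unop (y.down) : ↥(TriAux.Bsub R A B M)) = 0 := by
      apply Subtype.ext
      apply LinearMap.ext
      intro m
      exact hy m
    exact ULift.ext _ _ (unop_injective hz)
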